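/- Let -∞ ≤ l < u ≤ ∞ and let f : (l,u) → ℝ be twice continuously differentiable with f > 0 on (l,u), with f, f', f'' integrable on (l,u), ∫_l^u f = 1, and with lim f(b) = 0 and lim f'(b) = 0 as b → l⁺ and b → u⁻. Then the second Bartlett identity in the random parameter holds: ∫_l^u (d/db log f(b))² f(b) db + ∫_l^u (d²/db² log f(b)) f(b) db = ∫_l^u f''(b) db = 0. -/

import Mathlib

open MeasureTheory Filter Topology

open Set


lemma ftc_general {S : Set ℝ} (hSm : MeasurableSet S) (hconv : S.OrdConnected)
    {L1 L2 : Filter ℝ} [L1.NeBot] [L2.NeBot] [L1.IsCountablyGenerated] [L2.IsCountablyGenerated]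
    (hmem1 : ∀ᶠ t in L1, t ∈ S) (hmem2 : ∀ᶠ t in L2, t ∈ S)
    (hle1 : ∀ x ∈ S, ∀ᶠ t in L1, t ≤ x) (hle2 : ∀ x ∈ S, ∀ᶠ t in L2, x ≤ t)
    {g g' : ℝ → ℝ} (hderiv : ∀ x ∈ S, HasDerivAt g (g' x) x)
    (hint : IntegrableOn g' S) {m n : ℝ}
    (hm : Tendsto g L1 (𝓝 m)) (hn : Tendsto g L2 (𝓝 n)) :
    ∫ x in S, g' x = n - m := by
  obtain ⟨x₀, hx₀⟩ := hmem1.exists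
  have cover : AECover (volume.restrict S) (L1 ×ˢ L2) (fun p : ℝ × ℝ => Icc p.1 p.2) := by
    constructor
    · filter_upwards [ae_restrict_mem hSm] with x hx
      filter_upwards [(hle1 x hx).prod_mk (hle2 x hx)] with p hp
      exact ⟨hp.1, hp.2⟩
    · intro p; exact measurableSet_Icc
  refine cover.integral_eq_of_tendsto _ hint ?_
  have hev : ∀ᶠ p : ℝ × ℝ in L1 ×ˢ L2,
      g p.2 - g p.1 = ∫ x in Icc p.1 p.2, g' x ∂(volume.restrict S) := by
    filter_upwards [hmem1.prod_mk hmem2, (hle1 x₀ hx₀).prod_mk (hle2 x₀ hx₀)] with p hp hps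
    have hle : p.1 ≤ p.2 := hps.1.trans hps.2
    have hsub : Icc p.1 p.2 ⊆ S := hconv.out hp.1 hp.2
    rw [Measure.restrict_restrict measurableSet_Icc, inter_eq_left.mpr hsub]
    have hint' : IntervalIntegrable g' volume p.1 p.2 := by
      rw [intervalIntegrable_iff_integrableOn_Ioc_of_le hle]
      exact hint.mono (Ioc_subset_Icc_self.trans hsub) le_rfl
    have h2 := intervalIntegral.integral_eq_sub_of_hasDerivAt
      (fun y hy => hderiv y (hsub (by rwa [uIcc_of_le hle] at hy))) hint'
    rw [intervalIntegral.integral_of_le hle] at h2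
    rw [integral_Icc_eq_integral_Ioc, ← h2]
  exact (((hn.comp tendsto_snd).sub (hm.comp tendsto_fst))).congr' hev


/-- Theorem 4.1(ii) (second Bartlett identity in the random parameter): if the
density `f` is twice continuously differentiable and positive on the interval
`(l, u)` (endpoints allowed to be `±∞`), with `f`, `f'`, `f''` integrable,
`∫ f = 1`, and both `f` and `f'` vanishing in the limit at the endpoints, then
`∫ ((log f)')² f + ∫ (log f)'' f = ∫ f'' = 0`. -/
theorem second_bartlett_identity (l u : EReal) (hlu : l < u)
    (S : Set ℝ) (hS : S = {x : ℝ | l < (x : EReal) ∧ (x : EReal) < u})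
    (f : ℝ → ℝ)
    (hf_smooth : ContDiffOn ℝ 2 f S)
    (hf_pos : ∀ x ∈ S, 0 < f x)
    (hf_int : IntegrableOn f S)
    (hf'_int : IntegrableOn (deriv f) S)
    (hf''_int : IntegrableOn (deriv (deriv f)) S)
    (hf_one : (∫ x in S, f x) = 1)
    (hf_lim_l : Tendsto f (Filter.comap (fun x : ℝ => (x : EReal)) (𝓝[>] l)) (𝓝 (0 : ℝ)))
    (hf_lim_u : Tendsto f (Filter.comap (fun x : ℝ => (x : EReal)) (𝓝[<] u)) (𝓝 (0 : ℝ)))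
    (hf'_lim_l : Tendsto (deriv f)
      (Filter.comap (fun x : ℝ => (x : EReal)) (𝓝[>] l)) (𝓝 (0 : ℝ)))
    (hf'_lim_u : Tendsto (deriv f)
      (Filter.comap (fun x : ℝ => (x : EReal)) (𝓝[<] u)) (𝓝 (0 : ℝ))) :
    ((∫ b in S, (deriv (fun x => Real.log (f x)) b) ^ 2 * f b) +
        (∫ b in S, deriv (deriv (fun x => Real.log (f x))) b * f b))
      = (∫ b in S, deriv (deriv f) b) ∧
    (∫ b in S, deriv (deriv f) b) = 0 := by
  -- basic facts about S
  have hSpre : S = (fun x : ℝ => (x : EReal)) ⁻¹' (Ioo l u) := by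
    rw [hS]; rfl
  have hopen : IsOpen S := by
    rw [hSpre]; exact isOpen_Ioo.preimage continuous_coe_real_ereal
  have hSm : MeasurableSet S := hopen.measurableSet
  have hconv : S.OrdConnected := by
    refine ⟨fun x hx y hy z hz => ?_⟩
    rw [hS] at hx hy ⊢
    exact ⟨lt_of_lt_of_le hx.1 (EReal.coe_le_coe_iff.mpr hz.1),
      lt_of_le_of_lt (EReal.coe_le_coe_iff.mpr hz.2) hy.2⟩
  set L1 := Filter.comap (fun x : ℝ => (x : EReal)) (𝓝[>] l) with hL1
  set L2 := Filter.comap (fun x : ℝ => (x : EReal)) (𝓝[<] u) with hL2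
  -- NeBot instances
  have hNB1 : L1.NeBot := by
    rw [hL1, Filter.comap_neBot_iff]
    intro t ht
    rw [mem_nhdsGT_iff_exists_Ioo_subset' hlu] at ht
    obtain ⟨c, hc, hsub⟩ := ht
    obtain ⟨z, hz1, hz2⟩ := exists_between (show l < c from hc)
    induction z using EReal.rec with
    | bot => exact (not_lt_bot hz1).elim
    | coe r => exact ⟨r, hsub ⟨hz1, hz2⟩⟩
    | top =>
        exact absurd (hz2.trans_le le_top) (lt_irrefl _)
  have hNB2 : L2.NeBot := by
    rw [hL2, Filter.comap_neBot_iff]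
    intro t ht
    rw [mem_nhdsLT_iff_exists_Ioo_subset' hlu] at ht
    obtain ⟨c, hc, hsub⟩ := ht
    obtain ⟨z, hz1, hz2⟩ := exists_between (show c < u from hc)
    induction z using EReal.rec with
    | bot => exact (not_lt_bot hz1).elim
    | coe r => exact ⟨r, hsub ⟨hz1, hz2⟩⟩
    | top => exact (not_top_lt hz2).elim
  haveI := hNB1; haveI := hNB2
  haveI hCG1 : L1.IsCountablyGenerated := by rw [hL1]; infer_instance
  haveI hCG2 : L2.IsCountablyGenerated := by rw [hL2]; infer_instance
  -- membership and order eventualities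
  have hmem1 : ∀ᶠ t in L1, t ∈ S := by
    have h1 : Ioo l u ∈ 𝓝[>] l :=
      inter_mem self_mem_nhdsWithin
        (mem_nhdsWithin_of_mem_nhds (isOpen_Iio.mem_nhds hlu))
    have := Filter.preimage_mem_comap (m := fun x : ℝ => (x : EReal)) h1
    rw [← hSpre] at this
    exact this
  have hmem2 : ∀ᶠ t in L2, t ∈ S := by
    have h1 : Ioo l u ∈ 𝓝[<] u :=
      inter_mem (mem_nhdsWithin_of_mem_nhds (isOpen_Ioi.mem_nhds hlu)) self_mem_nhdsWithin
    have := Filter.preimage_mem_comap (m := fun x : ℝ => (x : EReal)) h1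
    rw [← hSpre] at this
    exact this
  have hle1 : ∀ x ∈ S, ∀ᶠ t in L1, t ≤ x := by
    intro x hx
    rw [hS] at hx
    have h1 : Iio (x : EReal) ∈ 𝓝[>] l :=
      mem_nhdsWithin_of_mem_nhds (isOpen_Iio.mem_nhds hx.1)
    have := Filter.preimage_mem_comap (m := fun x : ℝ => (x : EReal)) h1
    filter_upwards [this] with t ht
    exact le_of_lt (EReal.coe_lt_coe_iff.mp ht)
  have hle2 : ∀ x ∈ S, ∀ᶠ t in L2, x ≤ t := by
    intro x hx
    rw [hS] at hx
    have h1 : Ioi (x : EReal) ∈ 𝓝[<] u :=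
      mem_nhdsWithin_of_mem_nhds (isOpen_Ioi.mem_nhds hx.2)
    have := Filter.preimage_mem_comap (m := fun x : ℝ => (x : EReal)) h1
    filter_upwards [this] with t ht
    exact le_of_lt (EReal.coe_lt_coe_iff.mp ht)
  -- derivatives
  have hf' : ∀ x ∈ S, HasDerivAt f (deriv f x) x := fun x hx =>
    ((hf_smooth.differentiableOn (by norm_num)).differentiableAt
      (hopen.mem_nhds hx)).hasDerivAt
  have hf'C1 : ContDiffOn ℝ 1 (deriv f) S :=
    hf_smooth.deriv_of_isOpen hopen (by norm_num)
  have hf'' : ∀ x ∈ S, HasDerivAt (deriv f) (deriv (deriv f) x) x := fun x hx =>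
    ((hf'C1.differentiableOn (by norm_num)).differentiableAt (hopen.mem_nhds hx)).hasDerivAt
  -- part (b)
  have key : (∫ b in S, deriv (deriv f) b) = 0 := by
    have := ftc_general hSm hconv hmem1 hmem2 hle1 hle2 hf'' hf''_int hf'_lim_l hf'_lim_u
    simpa using this
  refine ⟨?_, key⟩
  -- log derivatives
  have hlog1 : ∀ x ∈ S, deriv (fun y => Real.log (f y)) x = deriv f x / f x := by
    intro x hx
    exact ((hf' x hx).log (ne_of_gt (hf_pos x hx))).deriv
  have hlog2 : ∀ x ∈ S, deriv (deriv (fun y => Real.log (f y))) x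
      = (deriv (deriv f) x * f x - deriv f x * deriv f x) / (f x) ^ 2 := by
    intro x hx
    have hev : deriv (fun y => Real.log (f y)) =ᶠ[𝓝 x] fun y => deriv f y / f y := by
      filter_upwards [hopen.mem_nhds hx] with y hy
      exact hlog1 y hy
    rw [hev.deriv_eq]
    exact (HasDerivAt.div (hf'' x hx) (hf' x hx) (ne_of_gt (hf_pos x hx))).deriv
  set A := fun b => (deriv (fun x => Real.log (f x)) b) ^ 2 * f b with hA
  set B := fun b => deriv (deriv (fun x => Real.log (f x))) b * f b with hB
  have hAB : ∀ x ∈ S, A x + B x = deriv (deriv f) x := by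
    intro x hx
    have hfx : f x ≠ 0 := ne_of_gt (hf_pos x hx)
    rw [hA, hB]
    simp only
    rw [hlog1 x hx, hlog2 x hx]
    field_simp
    ring
  by_cases hAint : IntegrableOn A S
  · have hBint : IntegrableOn B S := by
      apply (hf''_int.sub hAint).congr
      filter_upwards [ae_restrict_mem hSm] with x hx
      simp only [Pi.sub_apply]
      rw [← hAB x hx]; ring
    rw [← integral_add hAint hBint]
    apply setIntegral_congr_fun hSm
    intro x hx
    exact hAB x hx
  · have hBint : ¬ IntegrableOn B S := by
      intro hBint
      apply hAint
      apply (hf''_int.sub hBint).congr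
      filter_upwards [ae_restrict_mem hSm] with x hx
      simp only [Pi.sub_apply]
      rw [← hAB x hx]; ring
    rw [integral_undef hAint, integral_undef hBint, key]
    norm_num
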